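/- Let Z : Ω₀ → ℝ^{m1×m2} be a random matrix on a probability space whose entries are square-integrable with E[Z_{ab}] = 0 and E[Z_{ab} Z_{cd}] = σ² if (a,b) = (c,d) and 0 otherwise, for some σ² > 0. Let U ∈ ℝ^{m1×R} and V ∈ ℝ^{m2×R} have orthonormal columns and X := UUᵀ Z VVᵀ. Then for every entry index (i,j), the variance of X_{ij} satisfies E[X_{ij}²] = σ² μ_i(U) μ_j(V), the product of the coherences of the row and column subspaces with respect to the i-th and j-th standard basis vectors. -/

import Mathlib

open Matrix MeasureTheory

/-- The coherence `μ_i(U) := ‖P_U e_i‖₂²` of the column span of `U` with respect to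
the `i`-th standard basis vector, where `P_U = U Uᵀ`. -/
def coherence {m r : ℕ} (U : Matrix (Fin m) (Fin r) ℝ) (i : Fin m) : ℝ :=
  ∑ k, ((U * Uᵀ).mulVec (Pi.single i 1) k) ^ 2

/-- Under the SMG model `X = U Uᵀ Z V Vᵀ` with mean-zero, uncorrelated,
variance-`σ²` entries of `Z`, the variance of each entry satisfies
`E[X_{ij}²] = σ² μ_i(U) μ_j(V)`. -/
theorem smg_variance_coherence {m1 m2 R : ℕ} {Ω₀ : Type*} [MeasureSpace Ω₀]
    [IsProbabilityMeasure (volume : Measure Ω₀)]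
    (Z : Ω₀ → Matrix (Fin m1) (Fin m2) ℝ) (σ2 : ℝ) (hσ : 0 < σ2)
    (hL2 : ∀ a b, MemLp (fun ω => Z ω a b) 2 volume)
    (hmean : ∀ a b, (∫ ω, Z ω a b) = 0)
    (hcov : ∀ a b c d,
      (∫ ω, Z ω a b * Z ω c d) = if (a, b) = (c, d) then σ2 else 0)
    (U : Matrix (Fin m1) (Fin R) ℝ) (V : Matrix (Fin m2) (Fin R) ℝ)
    (hU : Uᵀ * U = 1) (hV : Vᵀ * V = 1) :
    let X : Ω₀ → Matrix (Fin m1) (Fin m2) ℝ := fun ω => (U * Uᵀ) * Z ω * (V * Vᵀ)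
    ∀ (i : Fin m1) (j : Fin m2),
      (∫ ω, (X ω i j) ^ 2) = σ2 * coherence U i * coherence V j := by
  intro X i j
  set P := U * Uᵀ with hP
  set Q := V * Vᵀ with hQ
  have hXrep : ∀ ω, X ω i j
      = ∑ p : Fin m1 × Fin m2, (P i p.1 * Q p.2 j) * Z ω p.1 p.2 := by
    intro ω
    show ((P * Z ω) * Q) i j = _
    rw [Fintype.sum_prod_type, Finset.sum_comm]
    simp only [Matrix.mul_apply, Finset.sum_mul]
    exact Finset.sum_congr rfl fun b _ => Finset.sum_congr rfl fun a _ => by ring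
  have hint : ∀ (p q : Fin m1 × Fin m2),
      Integrable (fun ω => Z ω p.1 p.2 * Z ω q.1 q.2) volume := by
    intro p q
    have h1 := hL2 p.1 p.2
    have h2 := hL2 q.1 q.2
    have hI := L2.integrable_inner (𝕜 := ℝ) (h1.toLp _) (h2.toLp _)
    refine hI.congr ?_
    filter_upwards [h1.coeFn_toLp, h2.coeFn_toLp] with ω e1 e2
    simp [e1, e2, RCLike.inner_apply, mul_comm]
  calc (∫ ω, (X ω i j) ^ 2)
      = ∫ ω, ∑ p : Fin m1 × Fin m2, ∑ q : Fin m1 × Fin m2,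
          ((P i p.1 * Q p.2 j) * (P i q.1 * Q q.2 j))
            * (Z ω p.1 p.2 * Z ω q.1 q.2) := by
        refine integral_congr_ae (Filter.Eventually.of_forall fun ω => ?_)
        dsimp only
        rw [hXrep ω, sq, Finset.sum_mul_sum]
        exact Finset.sum_congr rfl fun p _ => Finset.sum_congr rfl fun q _ => by ring
    _ = ∑ p : Fin m1 × Fin m2, ∑ q : Fin m1 × Fin m2,
          ((P i p.1 * Q p.2 j) * (P i q.1 * Q q.2 j))
            * ∫ ω, Z ω p.1 p.2 * Z ω q.1 q.2 := by
        rw [integral_finset_sum]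
        · exact Finset.sum_congr rfl fun p _ => by
            rw [integral_finset_sum]
            · exact Finset.sum_congr rfl fun q _ => integral_const_mul _ _
            · exact fun q _ => (hint p q).const_mul _
        · exact fun p _ => integrable_finset_sum _ fun q _ => (hint p q).const_mul _
    _ = ∑ p : Fin m1 × Fin m2, (P i p.1 * Q p.2 j) ^ 2 * σ2 := by
        refine Finset.sum_congr rfl fun p _ => ?_
        rw [Finset.sum_eq_single p]
        · rw [hcov, if_pos rfl]; ring
        · intro q _ hq
          rw [hcov, if_neg, mul_zero]
          simp only [Prod.mk.injEq, ← Prod.ext_iff]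
          exact fun h => hq h.symm
        · intro h; exact absurd (Finset.mem_univ p) h
    _ = σ2 * coherence U i * coherence V j := by
        have hco : ∀ {m r : ℕ} (W : Matrix (Fin m) (Fin r) ℝ) (k : Fin m),
            coherence W k = ∑ a, ((W * Wᵀ) a k) ^ 2 := by
          intro m r W k
          unfold coherence
          refine Finset.sum_congr rfl fun a _ => ?_
          simp [Matrix.mulVec, dotProduct, Pi.single_apply, mul_ite,
            Finset.sum_ite_eq' Finset.univ k]
        have hPsym : ∀ a, P a i = P i a := fun a => by
          simp [hP, Matrix.mul_apply, mul_comm]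
        rw [hco U i, hco V j, Fintype.sum_prod_type]
        simp only [← hP, ← hQ, mul_pow, Finset.sum_mul, Finset.mul_sum, hPsym]
        rw [Finset.sum_comm]
        exact Finset.sum_congr rfl fun a _ => Finset.sum_congr rfl fun b _ => by ring
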